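/- Let G_0 = G and let W_1, …, W_r be such that each W_t is a clique of G_{t−1} and G_t = G_{t−1}|W_t, define F_0 = STAB(G), F_t = {x ∈ STAB(G) : x_{W_j} = 1 for j = 1,…,t}, and S_t = S(G) ∩ F_t. Let cᵀx ≤ d be a valid inequality for STAB(G_r). Define f_r(x) = cᵀx and, for ℓ = r down to 1, λ^S_ℓ = max{ f_ℓ(x) − d : x ∈ S_{ℓ−1}, x_{W_ℓ} = 0 } (with the convention max ∅ = 0) and f_{ℓ−1}(x) = f_ℓ(x) + λ^S_ℓ (x_{W_ℓ} − 1). Then for every t ∈ {0,…,r}, the inequality f_t(x) ≤ d is valid for F_t. -/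

import Mathlib

open Finset

variable {V : Type*}

/-- A stable (independent) set of a graph: pairwise non-adjacent vertices. -/
def IsStable (G : SimpleGraph V) (S : Finset V) : Prop :=
  ∀ u ∈ S, ∀ v ∈ S, ¬ G.Adj u v

/-- The characteristic vectors of stable sets of `G`. -/
def stableVecs [DecidableEq V] (G : SimpleGraph V) : Set (V → ℝ) :=
  {x | ∃ S : Finset V, IsStable G S ∧ x = fun v => if v ∈ S then (1 : ℝ) else 0}

/-- The stable set polytope `STAB(G)`. -/
def STAB [DecidableEq V] (G : SimpleGraph V) : Set (V → ℝ) :=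
  convexHull ℝ (stableVecs G)

/-- `x_W = ∑_{v ∈ W} x_v`. -/
def vsum (W : Finset V) (x : V → ℝ) : ℝ := ∑ v ∈ W, x v

/-- The clique projection `G|W`: add every non-edge `uv` with `W ⊆ N(u) ∪ N(v)`. -/
def cliqueProj (G : SimpleGraph V) (W : Finset V) : SimpleGraph V where
  Adj u v := G.Adj u v ∨ (u ≠ v ∧ ¬G.Adj u v ∧ ∀ w ∈ W, G.Adj w u ∨ G.Adj w v)
  symm := by
    constructor
    rintro u v (h | ⟨hne, hna, h⟩)
    · exact Or.inl h.symm
    · exact Or.inr ⟨hne.symm, fun h' => hna h'.symm, fun w hw => (h w hw).symm⟩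
  loopless := by
    constructor
    rintro u (h | ⟨hne, _, _⟩)
    · first | exact G.irrefl h | exact G.loopless.irrefl u h
    · exact hne rfl

/-- Iterated projected graphs: `G_0 = G`, `G_t = G_{t-1} | W_t`. -/
def projSeq (G : SimpleGraph V) (W : ℕ → Finset V) : ℕ → SimpleGraph V
  | 0 => G
  | t + 1 => cliqueProj (projSeq G W t) (W (t + 1))

/-- `F_t = {x ∈ STAB(G) : x_{W_j} = 1, j = 1, …, t}`. -/
def Fface [DecidableEq V] (G : SimpleGraph V) (W : ℕ → Finset V) (t : ℕ) : Set (V → ℝ) :=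
  {x ∈ STAB G | ∀ j ∈ Finset.Icc 1 t, vsum (W j) x = 1}

/-- `α(G[H], c)`: the maximum `c`-weight of a stable set of `G` contained in `H`. -/
noncomputable def alphaW (G : SimpleGraph V) (H : Finset V) (c : V → ℝ) : ℝ :=
  sSup {r : ℝ | ∃ S : Finset V, S ⊆ H ∧ IsStable G S ∧ r = ∑ v ∈ S, c v}

/-- `α(G[H])`: the maximum cardinality of a stable set of `G` contained in `H`. -/
noncomputable def alphaOn (G : SimpleGraph V) (H : Finset V) : ℕ :=
  sSup {k : ℕ | ∃ S : Finset V, S ⊆ H ∧ IsStable G S ∧ S.card = k}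

/-- The stability number `α(G)`. -/
noncomputable def alphaNum [Fintype V] (G : SimpleGraph V) : ℕ :=
  sSup {k : ℕ | ∃ S : Finset V, IsStable G S ∧ S.card = k}

/-- `cᵀx`. -/
def dotp [Fintype V] (c x : V → ℝ) : ℝ := ∑ v, c v * x v

/-- The affine dimension of a set of points. -/
noncomputable def affDim (s : Set (V → ℝ)) : ℕ := Module.finrank ℝ (vectorSpan ℝ s)

/-- Strong hypertree (with hyperedges of size `k`). -/
inductive IsStrongHypertree [DecidableEq V] (k : ℕ) : Finset V → Finset (Finset V) → Prop
  | base (V' : Finset V) : IsStrongHypertree k V' {V'}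
  | step (V' : Finset V) (E : Finset (Finset V)) (v : V) (Wi : Finset V) :
      v ∈ V' → v ∈ Wi → Wi ∈ E →
      (∃ Wj ∈ E, Wj ≠ Wi ∧ (Wi ∩ Wj).card = k - 1) →
      IsStrongHypertree k (V'.erase v) (E.erase Wi) →
      IsStrongHypertree k V' E

/-- Condition (I): `|W_t| = k` and the subgraph of `G_{t-1}` induced by `W_1 ∪ ⋯ ∪ W_t`
is `k`-partite with stable vertex classes `V_t^1, …, V_t^k`. -/
def CondI [DecidableEq V] (G : SimpleGraph V) (W : ℕ → Finset V)
    (Vc : ℕ → ℕ → Finset V) (k t : ℕ) : Prop :=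
  (W t).card = k ∧
  (Finset.Icc 1 k).biUnion (Vc t) = (Finset.Icc 1 t).biUnion W ∧
  (∀ i ∈ Finset.Icc 1 k, ∀ j ∈ Finset.Icc 1 k, i ≠ j → Disjoint (Vc t i) (Vc t j)) ∧
  (∀ i ∈ Finset.Icc 1 k, ∀ u ∈ Vc t i, ∀ v ∈ Vc t i, ¬(projSeq G W (t - 1)).Adj u v)

/-- Condition (II): `T_t = (V_t, {W_1, …, W_t})` is a strong hypertree. -/
def CondII [DecidableEq V] (W : ℕ → Finset V) (Vc : ℕ → ℕ → Finset V) (k t : ℕ) : Prop :=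
  IsStrongHypertree k ((Finset.Icc 1 k).biUnion (Vc t)) ((Finset.Icc 1 t).image W)

/-- Condition (III): every `w ∉ V_t` misses some class `V_t^i` in `G_{t-1}`. -/
def CondIII [DecidableEq V] (G : SimpleGraph V) (W : ℕ → Finset V)
    (Vc : ℕ → ℕ → Finset V) (k t : ℕ) : Prop :=
  ∀ w : V, w ∉ (Finset.Icc 1 k).biUnion (Vc t) →
    ∃ i ∈ Finset.Icc 1 k, ∀ u ∈ Vc t i, ¬(projSeq G W (t - 1)).Adj w u

/-- Condition (IV). -/
def CondIV [Fintype V] [DecidableEq V] (G : SimpleGraph V) (W : ℕ → Finset V)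
    (Vc : ℕ → ℕ → Finset V) (k r : ℕ) : Prop :=
  ∀ i ∈ Finset.Icc 1 (k - 1), ∀ t ∈ Finset.Icc 1 r, ∀ v ∈ W t ∩ Vc t i,
    ∀ w ∈ Finset.univ \ (Finset.Icc 1 k).biUnion (Vc r),
      (∃ z ∈ Vc r i, (projSeq G W r).Adj z w) →
      (G.Adj v w ∨ ∃ t' ∈ Finset.Icc 1 r,
        (projSeq G W (t' - 1)).IsClique (W t : Set V) ∧
        W t ≠ W t' ∧ (W t ∩ W t').card = k - 1 ∧
        v ∉ W t' ∧ ∃ v' ∈ W t' ∩ Vc r i, (projSeq G W (t' - 1)).Adj v' w)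

/-- Condition (V): no vertex of `V_t^k` has a neighbor in `V_r^0` in the graph `G_r`. -/
def CondV [Fintype V] [DecidableEq V] (G : SimpleGraph V) (W : ℕ → Finset V)
    (Vc : ℕ → ℕ → Finset V) (k r t : ℕ) : Prop :=
  ∀ v ∈ Vc t k, ∀ w ∈ Finset.univ \ (Finset.Icc 1 k).biUnion (Vc r),
    ¬(projSeq G W r).Adj v w

/-- `STAB(G[H])`, embedded in `ℝ^V` (coordinates outside `H` are zero). -/
def STABon [DecidableEq V] (G : SimpleGraph V) (H : Finset V) : Set (V → ℝ) :=
  convexHull ℝ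
    {x | ∃ S : Finset V, S ⊆ H ∧ IsStable G S ∧ x = fun v => if v ∈ S then (1 : ℝ) else 0}


set_option linter.unusedSectionVars false
section Aux
variable [DecidableEq V]

lemma stableVecs_finite [Fintype V] (G : SimpleGraph V) : (stableVecs G).Finite := by
  apply Set.Finite.subset
    (Set.finite_range (fun S : Finset V => fun v => if v ∈ S then (1 : ℝ) else 0))
  rintro x ⟨S, _, rfl⟩; exact ⟨S, rfl⟩

lemma vsum_char (W S : Finset V) :
    vsum W (fun v => if v ∈ S then (1 : ℝ) else 0) = ((W ∩ S).card : ℝ) := by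
  unfold vsum
  rw [show (∑ v ∈ W, if v ∈ S then (1:ℝ) else 0) = ∑ v ∈ W ∩ S, (1:ℝ) from
    Finset.sum_ite_mem W S _]
  simp

lemma clique_inter_card {H : SimpleGraph V} {W S : Finset V}
    (hW : H.IsClique (W : Set V)) (hS : IsStable H S) : (W ∩ S).card ≤ 1 := by
  by_contra h
  push_neg at h
  obtain ⟨u, hu, v, hv, huv⟩ := Finset.one_lt_card.mp h
  simp only [Finset.mem_inter] at hu hv
  exact hS u hu.2 v hv.2 (hW hu.1 hv.1 huv)

lemma projSeq_succ (G : SimpleGraph V) (W : ℕ → Finset V) (t : ℕ) :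
    projSeq G W (t + 1) = cliqueProj (projSeq G W t) (W (t + 1)) := rfl

lemma stable_proj (G : SimpleGraph V) (W : ℕ → Finset V)
    {S : Finset V} (hS : IsStable G S) (t : ℕ)
    (hcard : ∀ j ∈ Finset.Icc 1 t, ((W j) ∩ S).card = 1) :
    IsStable (projSeq G W t) S := by
  induction t with
  | zero => exact hS
  | succ t ih =>
    have ih' : IsStable (projSeq G W t) S := by
      apply ih
      intro j hj
      exact hcard j (Finset.mem_Icc.mpr ⟨(Finset.mem_Icc.mp hj).1,
        (Finset.mem_Icc.mp hj).2.trans (Nat.le_succ t)⟩)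
    intro u hu v hv hadj
    rcases hadj with h | ⟨hne, hna, h⟩
    · exact ih' u hu v hv h
    · have h1 : ((W (t+1)) ∩ S).card = 1 :=
        hcard (t+1) (Finset.mem_Icc.mpr ⟨Nat.succ_le_succ (Nat.zero_le t), le_refl _⟩)
      obtain ⟨w, hw⟩ := Finset.card_eq_one.mp h1
      have hwmem : w ∈ W (t+1) ∩ S := by rw [hw]; exact Finset.mem_singleton_self w
      simp only [Finset.mem_inter] at hwmem
      rcases h w hwmem.1 with h' | h'
      · exact ih' w hwmem.2 u hu h'
      · exact ih' w hwmem.2 v hv h'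

end Aux

section Aux2
set_option linter.unusedSectionVars false
variable [DecidableEq V]

lemma vsum_finsum (Wj : Finset V) {ι : Type*} (A : Finset ι) (w : ι → ℝ) (z : ι → V → ℝ) :
    vsum Wj (∑ y ∈ A, w y • z y) = ∑ y ∈ A, w y * vsum Wj (z y) := by
  simp only [vsum, Finset.sum_apply, Pi.smul_apply, smul_eq_mul, Finset.mul_sum]
  exact Finset.sum_comm

lemma vsum_combo (Wj : Finset V) (x y : V → ℝ) (a b : ℝ) :
    vsum Wj (a • x + b • y) = a * vsum Wj x + b * vsum Wj y := by
  simp only [vsum, Pi.add_apply, Pi.smul_apply, smul_eq_mul, Finset.sum_add_distrib,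
    Finset.mul_sum]

lemma dotp_combo [Fintype V] (c x y : V → ℝ) (a b : ℝ) :
    dotp c (a • x + b • y) = a * dotp c x + b * dotp c y := by
  simp only [dotp, Pi.add_apply, Pi.smul_apply, smul_eq_mul, Finset.mul_sum,
    ← Finset.sum_add_distrib]
  exact Finset.sum_congr rfl fun v _ => by ring

lemma Fface_subset_hull [Fintype V] (G : SimpleGraph V) (W : ℕ → Finset V) {r : ℕ}
    (hclique : ∀ t ∈ Finset.Icc 1 r, (projSeq G W (t - 1)).IsClique (W t : Set V))
    (t : ℕ) (ht : t ≤ r) :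
    Fface G W t ⊆ convexHull ℝ (stableVecs G ∩ Fface G W t) := by
  intro x hx
  obtain ⟨hxS, hxW⟩ := hx
  set A := (stableVecs_finite G).toFinset with hA
  have hAeq : (A : Set (V → ℝ)) = stableVecs G := (stableVecs_finite G).coe_toFinset
  have hxA : x ∈ convexHull ℝ (A : Set (V → ℝ)) := by rw [hAeq]; exact hxS
  rw [Finset.convexHull_eq] at hxA
  obtain ⟨w, hw0, hw1, hwx⟩ := hxA
  have hwx' : ∑ y ∈ A, w y • y = x := by
    rw [Finset.centerMass_eq_of_sum_1 _ _ hw1] at hwx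
    simpa using hwx
  have key : ∀ j, 1 ≤ j → j ≤ t → ∀ y ∈ A, w y ≠ 0 → vsum (W j) y = 1 := by
    intro j
    induction j using Nat.strong_induction_on with
    | _ j ih =>
      intro hj1 hjt
      have hbnd : ∀ y ∈ A, w y ≠ 0 → vsum (W j) y ≤ 1 := by
        intro y hyA hwy
        have hy : y ∈ stableVecs G := (stableVecs_finite G).mem_toFinset.mp hyA
        obtain ⟨S, hSstable, rfl⟩ := hy
        have hScard : ∀ j' ∈ Finset.Icc 1 (j - 1), ((W j') ∩ S).card = 1 := by
          intro j' hj'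
          rw [Finset.mem_Icc] at hj'
          have hv := ih j' (by omega) (by omega) (by omega) _ hyA hwy
          rw [vsum_char] at hv
          exact_mod_cast hv
        have hstab := stable_proj G W hSstable (j - 1) hScard
        have hcl := hclique j (Finset.mem_Icc.mpr ⟨hj1, hjt.trans ht⟩)
        have hcard := clique_inter_card hcl hstab
        rw [vsum_char]
        exact_mod_cast hcard
      have hsum1 : ∑ y ∈ A, w y * vsum (W j) y = 1 := by
        have hv := hxW j (Finset.mem_Icc.mpr ⟨hj1, hjt⟩)
        rw [← hwx', vsum_finsum] at hv
        exact hv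
      have hzero : ∑ y ∈ A, w y * (1 - vsum (W j) y) = 0 := by
        have heq : ∑ y ∈ A, w y * (1 - vsum (W j) y)
            = (∑ y ∈ A, w y) - ∑ y ∈ A, w y * vsum (W j) y := by
          rw [← Finset.sum_sub_distrib]
          exact Finset.sum_congr rfl fun y _ => by ring
        rw [heq, hw1, hsum1]; ring
      have hnn : ∀ y ∈ A, 0 ≤ w y * (1 - vsum (W j) y) := by
        intro y hy
        rcases eq_or_ne (w y) 0 with h | h
        · simp [h]
        · exact mul_nonneg (hw0 y hy) (by linarith [hbnd y hy h])
      have hall := (Finset.sum_eq_zero_iff_of_nonneg hnn).mp hzero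
      intro y hyA hwy
      have h0 := hall y hyA
      rcases mul_eq_zero.mp h0 with h | h
      · exact absurd h hwy
      · linarith
  rw [← hwx']
  have hsum' : ∑ y ∈ A.filter (fun y => w y ≠ 0), w y • y = ∑ y ∈ A, w y • y := by
    apply Finset.sum_filter_of_ne
    intro y _ h hw
    exact h (by simp [hw])
  rw [← hsum']
  have hwsum : ∑ y ∈ A.filter (fun y => w y ≠ 0), w y = 1 := by
    rw [Finset.sum_filter_ne_zero, hw1]
  have : ∑ y ∈ A.filter (fun y => w y ≠ 0), w y • y
      = (A.filter (fun y => w y ≠ 0)).centerMass w id := by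
    rw [Finset.centerMass_eq_of_sum_1 _ _ hwsum]
    simp
  rw [this]
  apply Finset.centerMass_mem_convexHull
  · intro y hy; exact hw0 y (Finset.mem_filter.mp hy).1
  · rw [hwsum]; norm_num
  · intro y hy
    obtain ⟨hyA, hwy⟩ := Finset.mem_filter.mp hy
    have hy1 : y ∈ stableVecs G := (stableVecs_finite G).mem_toFinset.mp hyA
    refine ⟨hy1, subset_convexHull ℝ _ hy1, ?_⟩
    intro j hj
    rw [Finset.mem_Icc] at hj
    exact key j hj.1 hj.2 y hyA hwy

end Aux2

/-- validity of the strengthened lifting procedure. -/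
theorem stmt8 {V : Type*} [Fintype V] [DecidableEq V] (G : SimpleGraph V)
    (r : ℕ) (W : ℕ → Finset V)
    (hclique : ∀ t ∈ Finset.Icc 1 r, (projSeq G W (t - 1)).IsClique (W t : Set V))
    (c : V → ℝ) (d : ℝ)
    (hvalid : ∀ x ∈ STAB (projSeq G W r), dotp c x ≤ d)
    (f : ℕ → (V → ℝ) → ℝ) (lamS : ℕ → ℝ)
    (hfr : ∀ x, f r x = dotp c x)
    (hlam : ∀ l ∈ Finset.Icc 1 r, lamS l =
      sSup {y : ℝ | ∃ x ∈ stableVecs G ∩ Fface G W (l - 1),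
        vsum (W l) x = 0 ∧ y = f l x - d})
    (hrec : ∀ l ∈ Finset.Icc 1 r, ∀ x,
      f (l - 1) x = f l x + lamS l * (vsum (W l) x - 1)) :
    ∀ t ≤ r, ∀ x ∈ Fface G W t, f t x ≤ d := by
  -- closed form for f t
  have hform : ∀ m t, t + m = r → ∀ x,
      f t x = dotp c x + ∑ l ∈ Finset.Icc (t + 1) r, lamS l * (vsum (W l) x - 1) := by
    intro m
    induction m with
    | zero =>
      intro t htr x
      obtain rfl : t = r := by omega
      rw [Finset.Icc_eq_empty (by omega), Finset.sum_empty, hfr, add_zero]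
    | succ m ih =>
      intro t htr x
      have hmem : t + 1 ∈ Finset.Icc 1 r := Finset.mem_Icc.mpr ⟨by omega, by omega⟩
      have hrec' := hrec (t + 1) hmem x
      rw [Nat.add_sub_cancel] at hrec'
      rw [hrec', ih (t + 1) (by omega) x]
      have hins : Finset.Icc (t + 1) r = insert (t + 1) (Finset.Icc (t + 2) r) := by
        ext z; simp only [Finset.mem_Icc, Finset.mem_insert]; omega
      rw [hins, Finset.sum_insert (by simp [Finset.mem_Icc])]
      ring
  -- validity on integral points
  have hint : ∀ m t, t + m = r → ∀ x ∈ stableVecs G ∩ Fface G W t, f t x ≤ d := by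
    intro m
    induction m with
    | zero =>
      intro t htr x hx
      obtain rfl : t = r := by omega
      obtain ⟨⟨S, hSst, rfl⟩, _, hxW⟩ := hx
      have hScard : ∀ j ∈ Finset.Icc 1 t, ((W j) ∩ S).card = 1 := by
        intro j hj
        have := hxW j hj
        rw [vsum_char] at this
        exact_mod_cast this
      have hst := stable_proj G W hSst t hScard
      rw [hfr]
      exact hvalid _ (subset_convexHull ℝ _ ⟨S, hst, rfl⟩)
    | succ m ih =>
      intro t htr x hx
      obtain ⟨⟨S, hSst, hxeq⟩, hxSTAB, hxW⟩ := hx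
      have hmem : t + 1 ∈ Finset.Icc 1 r := Finset.mem_Icc.mpr ⟨by omega, by omega⟩
      have hScard : ∀ j ∈ Finset.Icc 1 t, ((W j) ∩ S).card = 1 := by
        intro j hj
        have := hxW j hj
        rw [hxeq, vsum_char] at this
        exact_mod_cast this
      have hstab := stable_proj G W hSst t hScard
      have hcl := hclique (t + 1) hmem
      rw [Nat.add_sub_cancel] at hcl
      have hle : ((W (t + 1)) ∩ S).card ≤ 1 := clique_inter_card hcl hstab
      have hrec' := hrec (t + 1) hmem x
      rw [Nat.add_sub_cancel] at hrec'
      rcases Nat.le_one_iff_eq_zero_or_eq_one.mp hle with h0 | h1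
      · -- x misses W (t+1)
        have hv0 : vsum (W (t + 1)) x = 0 := by
          rw [hxeq, vsum_char, h0]; norm_num
        have hlam' := hlam (t + 1) hmem
        rw [Nat.add_sub_cancel] at hlam'
        have hbdd : BddAbove {y : ℝ | ∃ x' ∈ stableVecs G ∩ Fface G W t,
            vsum (W (t + 1)) x' = 0 ∧ y = f (t + 1) x' - d} := by
          apply Set.Finite.bddAbove
          apply Set.Finite.subset ((stableVecs_finite G).image (fun x' => f (t + 1) x' - d))
          rintro y ⟨x', ⟨hx'1, _⟩, _, rfl⟩
          exact ⟨x', hx'1, rfl⟩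
        have hmemY : (f (t + 1) x - d) ∈ {y : ℝ | ∃ x' ∈ stableVecs G ∩ Fface G W t,
            vsum (W (t + 1)) x' = 0 ∧ y = f (t + 1) x' - d} :=
          ⟨x, ⟨⟨S, hSst, hxeq⟩, hxSTAB, hxW⟩, hv0, rfl⟩
        have hge : f (t + 1) x - d ≤ lamS (t + 1) := by
          rw [hlam']; exact le_csSup hbdd hmemY
        rw [hrec', hv0]; linarith
      · -- x meets W (t+1): x ∈ Fface (t+1)
        have hv1 : vsum (W (t + 1)) x = 1 := by
          rw [hxeq, vsum_char, h1]; norm_num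
        have hnext : f (t + 1) x ≤ d := by
          apply ih (t + 1) (by omega) x
          refine ⟨⟨S, hSst, hxeq⟩, hxSTAB, ?_⟩
          intro j hj
          rw [Finset.mem_Icc] at hj
          rcases eq_or_lt_of_le hj.2 with h | h
          · rw [h]; exact hv1
          · exact hxW j (Finset.mem_Icc.mpr ⟨hj.1, by omega⟩)
        rw [hrec', hv1]; simp; linarith
  -- assemble via convexity
  intro t ht x hx
  have hx' := Fface_subset_hull G W hclique t ht hx
  set g : (V → ℝ) → ℝ :=
    fun z => dotp c z + ∑ l ∈ Finset.Icc (t + 1) r, lamS l * (vsum (W l) z - 1) with hg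
  have hconv : Convex ℝ {z : V → ℝ | g z ≤ d} := by
    intro p hp q hq a b ha hb hab
    simp only [Set.mem_setOf_eq, hg] at hp hq ⊢
    rw [dotp_combo]
    have hsum : ∑ l ∈ Finset.Icc (t + 1) r, lamS l * (vsum (W l) (a • p + b • q) - 1)
        = a * ∑ l ∈ Finset.Icc (t + 1) r, lamS l * (vsum (W l) p - 1)
          + b * ∑ l ∈ Finset.Icc (t + 1) r, lamS l * (vsum (W l) q - 1) := by
      rw [Finset.mul_sum, Finset.mul_sum, ← Finset.sum_add_distrib]
      refine Finset.sum_congr rfl fun l _ => ?_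
      rw [vsum_combo]
      linear_combination lamS l * hab
    rw [hsum]
    have h1 := mul_le_mul_of_nonneg_left hp ha
    have h2 := mul_le_mul_of_nonneg_left hq hb
    have h3 : a * d + b * d = d := by rw [← add_mul, hab, one_mul]
    linarith
  have hsub : stableVecs G ∩ Fface G W t ⊆ {z : V → ℝ | g z ≤ d} := by
    intro z hz
    have hd := hint (r - t) t (by omega) z hz
    rw [hform (r - t) t (by omega) z] at hd
    exact hd
  have hfin := convexHull_min hsub hconv hx'
  rw [hform (r - t) t (by omega) x]
  exact hfin
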